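/- A metric space X is large scale paracompact if and only if for each δ > 0 there exist a set S, a simplicial complex K ⊆ Δ(S), and a δ-partition of unity f: X → K. -/

import Mathlib

open Function Metric ENNReal

noncomputable section

/-- `ℓ¹(S)`: real-valued functions on `S` with finite `ℓ¹`-norm, with the `ℓ¹` metric. -/
abbrev ellOne (S : Type u) : Type u := lp (fun _ : S => ℝ) 1

/-- The full simplex `Δ(S) ⊆ ℓ¹(S)`. -/
def fullSimplex (S : Type u) : Set (ellOne S) :=
  {p | (∀ s, 0 ≤ p s) ∧ (support (p : S → ℝ)).Finite ∧ ∑' s, p s = 1}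

/-- The `n`-skeleton `Δ(S)^(n)` of the full simplex. -/
def skeleton (S : Type u) (n : ℕ) : Set (ellOne S) :=
  {p ∈ fullSimplex S | (support (p : S → ℝ)).encard ≤ n + 1}

/-- A simplicial complex on `S`: a subset of `Δ(S)` closed under passing to
points whose support is contained in the support of a member. -/
def IsSimplicialComplex {S : Type u} (K : Set (ellOne S)) : Prop :=
  K ⊆ fullSimplex S ∧
    ∀ p ∈ K, ∀ q ∈ fullSimplex S,
      support (q : S → ℝ) ⊆ support (p : S → ℝ) → q ∈ K

/-- The star of a vertex `v` in `K`. -/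
def star {S : Type u} (K : Set (ellOne S)) (v : S) : Set (ellOne S) :=
  {p ∈ K | 0 < p v}

/-- `f` is `(λ, C)`-Lipschitz. -/
def IsLipschitzLC {X Y : Type*} [MetricSpace X] [MetricSpace Y]
    (l C : ℝ) (f : X → Y) : Prop :=
  ∀ x y, dist (f x) (f y) ≤ l * dist x y + C

/-- A family of sets is uniformly bounded. -/
def UniformlyBounded {X : Type*} [MetricSpace X] {ι : Type*} (U : ι → Set X) : Prop :=
  ∃ M : ℝ, ∀ i, ∀ x ∈ U i, ∀ y ∈ U i, dist x y ≤ M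

/-- `U` is a cover of the whole space. -/
def IsCover {X : Type*} {ι : Type*} (U : ι → Set X) : Prop := ∀ x, ∃ i, x ∈ U i

/-- The Lebesgue number `inf_x sup_i dist(x, X∖Uᵢ)` of a family, as a value in `ℝ≥0∞`. -/
def lebesgue {X : Type*} [MetricSpace X] {ι : Type*} (U : ι → Set X) : ℝ≥0∞ :=
  ⨅ x : X, ⨆ i, EMetric.infEdist x (U i)ᶜ

/-- The multiplicity of `U` is at most `m`. -/
def MultiplicityLE {X : Type*} [MetricSpace X] {ι : Type*} (U : ι → Set X) (m : ℕ) : Prop :=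
  ∀ x : X, {i | 0 < Metric.infDist x ((U i)ᶜ)}.encard ≤ m

/-- `f : X → K` is a `δ`-partition of unity. -/
def IsDeltaPartitionOfUnity {X : Type*} [MetricSpace X] {S : Type u}
    (δ : ℝ) (K : Set (ellOne S)) (f : X → ellOne S) : Prop :=
  (∀ x, f x ∈ K) ∧ IsLipschitzLC δ δ f ∧
    UniformlyBounded (fun v : S => f ⁻¹' star K v) ∧
    ENNReal.ofReal (1 / δ) ≤ lebesgue (fun v : S => f ⁻¹' star K v)

/-- `X` is large scale paracompact. -/
def LSParacompact (X : Type u) [MetricSpace X] : Prop :=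
  ∀ (ι : Type u) (U : ι → Set X), IsCover U → UniformlyBounded U →
    ∀ l C : ℝ, 0 < l → 0 < C →
      ∃ (S : Type u) (K : Set (ellOne S)) (f : X → ellOne S),
        IsSimplicialComplex K ∧ (∀ x, f x ∈ K) ∧ IsLipschitzLC l C f ∧
        UniformlyBounded (fun v : S => f ⁻¹' star K v) ∧
        ∀ i, ∃ v : S, U i ⊆ f ⁻¹' star K v

/-- `X` has asymptotic dimension at most `n`. -/
def AsdimLE (X : Type u) [MetricSpace X] (n : ℕ) : Prop :=
  ∀ R : ℝ, 0 < R → ∃ (ι : Type u) (U : ι → Set X),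
    IsCover U ∧ UniformlyBounded U ∧ MultiplicityLE U (n + 1) ∧
    ENNReal.ofReal R ≤ lebesgue U

/-- `X` has Property A. -/
def PropertyA (X : Type u) [MetricSpace X] : Prop :=
  ∀ R ε : ℝ, 0 < R → 0 < ε →
    ∃ (M : ℝ) (S : Type u) (φ : S → X → ℝ), 0 < M ∧
      (∀ s x, 0 ≤ φ s x ∧ φ s x ≤ 1) ∧
      (∀ x, (support fun s => φ s x).Finite) ∧
      (∀ x, ∑' s, φ s x = 1) ∧
      (∀ x y, dist x y ≤ R → ∑' s, |φ s x - φ s y| < ε) ∧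
      (∀ s, ∀ x ∈ support (φ s), ∀ y ∈ support (φ s), dist x y ≤ M)

/-- `f` has `(R, ε)` variation. -/
def HasVariation {X Y : Type*} [MetricSpace X] [MetricSpace Y] (R ε : ℝ) (f : X → Y) : Prop :=
  ∀ x y, dist x y ≤ R → dist (f x) (f y) < ε

/-- `g` is a coarse embedding. -/
def CoarseEmbedding {X Y : Type*} [MetricSpace X] [MetricSpace Y] (g : X → Y) : Prop :=
  ∃ ρminus ρplus : ℝ → ℝ, Monotone ρminus ∧ Monotone ρplus ∧
    Filter.Tendsto ρminus Filter.atTop Filter.atTop ∧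
    ∀ x y, ρminus (dist x y) ≤ dist (g x) (g y) ∧ dist (g x) (g y) ≤ ρplus (dist x y)

/-- `X` has bounded geometry: balls of any fixed radius have uniformly bounded cardinality. -/
def BoundedGeometry (X : Type*) [MetricSpace X] : Prop :=
  ∀ r : ℝ, 0 < r → ∃ N : ℕ, ∀ x : X, (Metric.ball x r).encard ≤ N

/-- A metric space `X` is large scale paracompact iff for each `δ > 0`
there exist a set `S`, a simplicial complex `K ⊆ Δ(S)`, and a `δ`-partition of unity
`f : X → K`. -/
theorem lsParacompact_iff_deltaPartitions (X : Type u) [MetricSpace X] :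
    LSParacompact X ↔
      ∀ δ : ℝ, 0 < δ → ∃ (S : Type u) (K : Set (ellOne S)) (f : X → ellOne S),
        IsSimplicialComplex K ∧ IsDeltaPartitionOfUnity δ K f := by
  constructor
  · -- forward direction
    intro h δ hδ
    have hδinv : (0:ℝ) ≤ 1/δ := by positivity
    obtain ⟨S, K, f, hK, hmem, hlip, hub, hstar⟩ :=
      h X (fun x => Metric.closedBall x (1/δ))
        (fun x => ⟨x, Metric.mem_closedBall_self hδinv⟩)
        ⟨2/δ, by
          intro i x hx y hy
          have h1 : dist x i ≤ 1/δ := Metric.mem_closedBall.mp hx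
          have h2 : dist y i ≤ 1/δ := Metric.mem_closedBall.mp hy
          calc dist x y ≤ dist x i + dist i y := dist_triangle x i y
            _ = dist x i + dist y i := by rw [dist_comm i y]
            _ ≤ 1/δ + 1/δ := add_le_add h1 h2
            _ = 2/δ := by ring⟩
        δ δ hδ hδ
    refine ⟨S, K, f, hK, hmem, hlip, hub, ?_⟩
    refine le_iInf fun x => ?_
    obtain ⟨v, hv⟩ := hstar x
    refine le_trans ?_ (le_iSup _ v)
    refine EMetric.le_infEdist.mpr ?_
    intro y hy
    have hyx : ¬ dist y x ≤ 1/δ := by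
      intro hle
      exact hy (hv (Metric.mem_closedBall.mpr hle))
    rw [edist_dist, dist_comm]
    exact ENNReal.ofReal_le_ofReal (le_of_not_ge hyx)
  · -- reverse direction
    intro h ι U hcov hub l C hl hC
    by_cases hX : Nonempty X
    · obtain ⟨M, hM⟩ := hub
      obtain ⟨x₀⟩ := hX
      obtain ⟨i₀, hi₀⟩ := hcov x₀
      have hM0 : 0 ≤ M := by
        have := hM i₀ x₀ hi₀ x₀ hi₀
        simpa using this
      set δ := min (min l C) (1/(M+1)) with hδdef
      have hδ : 0 < δ := lt_min (lt_min hl hC) (by positivity)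
      obtain ⟨S, K, f, hK, hmem, hlip, hubV, hleb⟩ := h δ hδ
      obtain ⟨hpos, hfin, hsum⟩ := hK.1 (hmem x₀)
      have hsupp : (support (⇑(f x₀))).Nonempty := by
        by_contra hco
        rw [Set.not_nonempty_iff_eq_empty, support_eq_empty_iff] at hco
        rw [hco] at hsum
        simp at hsum
      obtain ⟨v₀, _⟩ := hsupp
      refine ⟨S, K, f, hK, hmem, ?_, hubV, ?_⟩
      · intro x y
        have h1 := hlip x y
        have hd : (0:ℝ) ≤ dist x y := dist_nonneg
        have hδl : δ ≤ l := le_trans (min_le_left _ _) (min_le_left _ _)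
        have hδC : δ ≤ C := le_trans (min_le_left _ _) (min_le_right _ _)
        nlinarith
      · intro i
        rcases Set.eq_empty_or_nonempty (U i) with he | ⟨x, hx⟩
        · exact ⟨v₀, by simp [he]⟩
        · have h1 : ENNReal.ofReal (1/δ) ≤ ⨆ v, EMetric.infEdist x (f ⁻¹' star K v)ᶜ :=
            le_trans hleb (iInf_le _ x)
          have hMlt : ENNReal.ofReal M < ENNReal.ofReal (1/δ) := by
            rw [ENNReal.ofReal_lt_ofReal_iff (by positivity)]
            have hle : δ ≤ 1/(M+1) := min_le_right _ _
            have h2 : M + 1 ≤ 1/δ := by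
              have := one_div_le_one_div_of_le hδ hle
              rwa [one_div_one_div] at this
            linarith
          obtain ⟨v, hv⟩ := lt_iSup_iff.mp (lt_of_lt_of_le hMlt h1)
          refine ⟨v, fun y hy => ?_⟩
          by_contra hyv
          have hle : EMetric.infEdist x (f ⁻¹' star K v)ᶜ ≤ edist x y :=
            EMetric.infEdist_le_edist_of_mem hyv
          rw [edist_dist] at hle
          have hd : dist x y ≤ M := hM i x hx y hy
          exact absurd (hle.trans (ENNReal.ofReal_le_ofReal hd)) (not_le.mpr hv)
    · refine ⟨PUnit.{u+1}, ∅, fun x => (hX ⟨x⟩).elim,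
        ⟨Set.empty_subset _, fun p hp => hp.elim⟩,
        fun x => (hX ⟨x⟩).elim, fun x => (hX ⟨x⟩).elim,
        ⟨0, fun v x hx => (hX ⟨x⟩).elim⟩,
        fun i => ⟨PUnit.unit, fun x hx => (hX ⟨x⟩).elim⟩⟩

end
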